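/- Let J be a finite type and let S₁, …, S_n (with n ≥ 1) be finitely many subsets of J. Let U = {x ∈ (0,+∞]^J : there exists k ∈ {1,…,n} such that x(j) ≠ +∞ for all j ∈ S_k}, an open subset of (0,+∞]^J. Then the inclusion map U ↪ (0,+∞]^J, with U carrying the subspace topology, is a contractible map. -/
import Mathlib


/-- The half-open interval `(0, +∞]`, as a subspace of the extended non-negative reals. -/
abbrev OpenInfty : Type := {t : ENNReal // t ≠ 0}

/-- A continuous map `f : X → Y` is *contractible* if the topology on `Y` admits a basis
all of whose members have contractible preimage under `f`. -/
def ContractibleMap {X Y : Type*} [TopologicalSpace X] [TopologicalSpace Y]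
    (f : X → Y) : Prop :=
  Continuous f ∧ ∃ B : Set (Set Y), TopologicalSpace.IsTopologicalBasis B ∧
    ∀ V ∈ B, ContractibleSpace (f ⁻¹' V)

open scoped NNReal ENNReal unitInterval
open TopologicalSpace Set

/-- `(0,∞]` is homeomorphic to `ℝ≥0` via `x ↦ x⁻¹`. -/
noncomputable def eHomeo : OpenInfty ≃ₜ ℝ≥0 :=
  (Homeomorph.mk
    { toFun := fun x => ⟨(x : ℝ≥0∞)⁻¹, ENNReal.inv_ne_top.2 x.2⟩
      invFun := fun a => ⟨(a : ℝ≥0∞)⁻¹, ENNReal.inv_ne_zero.2 a.2⟩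
      left_inv := fun x => by ext; simp
      right_inv := fun a => by ext; simp }
    ((continuous_inv.comp continuous_subtype_val).subtype_mk _)
    ((continuous_inv.comp continuous_subtype_val).subtype_mk _)).trans
    ENNReal.neTopHomeomorphNNReal

lemma eHomeo_eq_zero_iff (x : OpenInfty) : eHomeo x = 0 ↔ (x : ℝ≥0∞) = ⊤ := by
  show ((x : ℝ≥0∞)⁻¹).toNNReal = 0 ↔ _
  rw [ENNReal.toNNReal_eq_zero_iff]
  simp [ENNReal.inv_eq_zero, ENNReal.inv_eq_top, x.2]

/-- Contractibility of the inclusion of a subset transfers along a homeomorphism of the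
ambient space. -/
lemma contractibleMap_val_preimage {Y Y' : Type*} [TopologicalSpace Y] [TopologicalSpace Y']
    (Φ : Y ≃ₜ Y') (U' : Set Y')
    (h : ContractibleMap (Subtype.val : U' → Y')) :
    ContractibleMap (Subtype.val : (Φ ⁻¹' U') → Y) := by
  obtain ⟨-, B', hB', hc⟩ := h
  refine ⟨continuous_subtype_val, (Set.preimage Φ) '' B', hB'.isInducing Φ.isInducing, ?_⟩
  rintro V ⟨V', hV'mem, rfl⟩
  have := hc V' hV'mem
  let F : (Subtype.val ⁻¹' (Φ ⁻¹' V') : Set (Φ ⁻¹' U')) ≃ₜ (Subtype.val ⁻¹' V' : Set U') :=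
    { toFun := fun x => ⟨⟨Φ x.1.1, x.1.2⟩, x.2⟩
      invFun := fun y => ⟨⟨Φ.symm y.1.1, by simpa using y.1.2⟩,
        by simpa only [Set.mem_preimage, Homeomorph.apply_symm_apply] using y.2⟩
      left_inv := fun x => by ext : 2 <;> simp
      right_inv := fun y => by ext : 2 <;> simp
      continuous_toFun := by
        apply Continuous.subtype_mk; apply Continuous.subtype_mk
        exact Φ.continuous.comp (continuous_subtype_val.comp continuous_subtype_val)
      continuous_invFun := by
        apply Continuous.subtype_mk; apply Continuous.subtype_mk
        exact Φ.symm.continuous.comp (continuous_subtype_val.comp continuous_subtype_val) }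
  exact F.contractibleSpace

/-- The key special case: the analogous statement inside `ℝ≥0^J`, where the relevant set is
`{y | ∃ k, ∀ j ∈ S k, y j ≠ 0}`; metric balls give a basis with star-shaped (hence
contractible) preimages. -/
lemma nnreal_side {J : Type*} [Finite J] {n : ℕ} (hn : 1 ≤ n) (S : Fin n → Set J) :
    ContractibleMap (Subtype.val :
      {y : J → ℝ≥0 | ∃ k : Fin n, ∀ j ∈ S k, y j ≠ 0} → (J → ℝ≥0)) := by
  cases nonempty_fintype J
  set U' : Set (J → ℝ≥0) := {y : J → ℝ≥0 | ∃ k : Fin n, ∀ j ∈ S k, y j ≠ 0} with hU'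
  refine ⟨continuous_subtype_val,
    {s : Set (J → ℝ≥0) | ∃ y ε, 0 < ε ∧ s = Metric.ball y ε}, ?_, ?_⟩
  · apply isTopologicalBasis_of_isOpen_of_nhds
    · rintro u ⟨y, ε, hε, rfl⟩; exact Metric.isOpen_ball
    · intro x u hx hu
      obtain ⟨ε, hε, hb⟩ := Metric.isOpen_iff.1 hu x hx
      exact ⟨Metric.ball x ε, ⟨x, ε, hε, rfl⟩, Metric.mem_ball_self hε, hb⟩
  rintro V ⟨y, ε, hε, rfl⟩
  -- the center point of the contraction
  set c : ℝ≥0 := Real.toNNReal (ε / 2) with hc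
  have hc0 : 0 < c := Real.toNNReal_pos.2 (by linarith)
  have hcc : (c : ℝ) = ε / 2 := Real.coe_toNNReal _ (by linarith)
  set p : J → ℝ≥0 := fun j => y j + c with hp
  have hp0 : ∀ j, p j ≠ 0 := fun j => by positivity
  have hpd : ∀ j, dist (p j) (y j) < ε := by
    intro j
    rw [NNReal.dist_eq]
    push_cast [hp]
    rw [hcc]
    rw [abs_of_nonneg (by linarith)]
    linarith
  have hpU : p ∈ U' := ⟨⟨0, hn⟩, fun j _ => hp0 j⟩
  have hpB : p ∈ Metric.ball y ε := by
    rw [Metric.mem_ball, dist_pi_lt_iff hε]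
    exact fun j => hpd j
  -- the homotopy parameter as a nonnegative real
  set sc : I → ℝ≥0 := fun t => Real.toNNReal t.1 with hsc
  have hsc_cont : Continuous sc := continuous_real_toNNReal.comp continuous_subtype_val
  have hsc_coe : ∀ t : I, (sc t : ℝ) = t.1 := fun t => Real.coe_toNNReal _ t.2.1
  have hsc_le : ∀ t : I, sc t ≤ 1 := fun t => by
    rw [← NNReal.coe_le_coe, hsc_coe]; exact t.2.2
  -- the straight-line homotopy towards `p` and its properties
  set G : I × (J → ℝ≥0) → (J → ℝ≥0) :=
    fun q => fun j => (1 - sc q.1) * q.2 j + sc q.1 * p j with hG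
  have hGU : ∀ (t : I) (x : J → ℝ≥0), x ∈ U' → G (t, x) ∈ U' := by
    rintro t x ⟨k, hk⟩
    refine ⟨k, fun j hj => ?_⟩
    intro h0
    rw [hG] at h0
    simp only [add_eq_zero, mul_eq_zero] at h0
    rcases h0 with ⟨h1, h2⟩
    rcases h2 with h2 | h2
    · rcases h1 with h1 | h1
      · rw [h2] at h1; simp at h1
      · exact hk j hj h1
    · exact hp0 j h2
  have hGB : ∀ (t : I) (x : J → ℝ≥0), x ∈ Metric.ball y ε → G (t, x) ∈ Metric.ball y ε := by
    intro t x hx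
    rw [Metric.mem_ball, dist_pi_lt_iff hε] at hx ⊢
    intro j
    have hxj := hx j
    rw [NNReal.dist_eq] at hxj ⊢
    have hbj := hpd j
    rw [NNReal.dist_eq] at hbj
    have hcoe : ((1 - sc t : ℝ≥0) : ℝ) = 1 - t.1 := by
      rw [NNReal.coe_sub (hsc_le t), hsc_coe]; simp
    have h1 : ((G (t, x) j : ℝ≥0) : ℝ) = (1 - t.1) * (x j : ℝ) + t.1 * (p j : ℝ) := by
      rw [hG]; push_cast; rw [hcoe, hsc_coe]
    rw [h1]
    have ht0 : (0:ℝ) ≤ t.1 := t.2.1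
    have ht1 : t.1 ≤ (1:ℝ) := t.2.2
    have h1s : (0:ℝ) ≤ 1 - t.1 := by linarith
    have ha := abs_lt.1 hxj
    have hb := abs_lt.1 hbj
    set a : ℝ := (x j : ℝ) - y j with hadef
    set b : ℝ := (p j : ℝ) - y j with hbdef
    have hrew : (1 - t.1) * (x j : ℝ) + t.1 * (p j : ℝ) - (y j : ℝ)
        = (1 - t.1) * a + t.1 * b := by rw [hadef, hbdef]; ring
    rw [abs_lt, hrew]
    have q1 := mul_le_mul_of_nonneg_left (le_max_left a b) h1s
    have q2 := mul_le_mul_of_nonneg_left (le_max_right a b) ht0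
    have q3 := mul_le_mul_of_nonneg_left (min_le_left a b) h1s
    have q4 := mul_le_mul_of_nonneg_left (min_le_right a b) ht0
    have hmax : max a b < ε := max_lt ha.2 hb.2
    have hmin : -ε < min a b := lt_min ha.1 hb.1
    constructor <;> nlinarith
  have hGcont : Continuous G := by
    apply continuous_pi
    intro j
    exact ((continuous_const.sub (hsc_cont.comp continuous_fst)).mul
      ((continuous_apply j).comp continuous_snd)).add
      ((hsc_cont.comp continuous_fst).mul continuous_const)
  -- assemble the contraction
  rw [contractible_iff_id_nullhomotopic]
  refine ⟨⟨⟨p, hpU⟩, hpB⟩, ⟨?_⟩⟩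
  refine ContinuousMap.Homotopy.mk
    ⟨fun q => ⟨⟨G (q.1, q.2.1.1), hGU q.1 q.2.1.1 q.2.1.2⟩, hGB q.1 q.2.1.1 q.2.2⟩, ?_⟩ ?_ ?_
  · apply Continuous.subtype_mk
    apply Continuous.subtype_mk
    exact hGcont.comp (continuous_fst.prodMk
      (continuous_subtype_val.comp (continuous_subtype_val.comp continuous_snd)))
  · intro x
    apply Subtype.ext; apply Subtype.ext; funext j
    show (1 - sc 0) * (x.1.1 j) + sc 0 * p j = x.1.1 j
    have : sc 0 = 0 := by rw [hsc]; simp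
    rw [this]; simp
  · intro x
    apply Subtype.ext; apply Subtype.ext; funext j
    show (1 - sc 1) * (x.1.1 j) + sc 1 * p j = p j
    have : sc 1 = 1 := by rw [hsc]; simp
    rw [this]; simp

/-- Let `J` be a finite type and `S 1, …, S n` (with `n ≥ 1`) finitely many subsets of `J`.
Let `U` be the set of `x ∈ (0,+∞]^J` for which there is some `k` with `x j ≠ +∞` for all
`j ∈ S k`. Then `U` is open and the inclusion `U ↪ (0,+∞]^J` is a contractible map. -/
theorem stmt8 {J : Type*} [Finite J] {n : ℕ} (hn : 1 ≤ n) (S : Fin n → Set J) :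
    IsOpen {x : J → OpenInfty | ∃ k : Fin n, ∀ j ∈ S k, (x j : ENNReal) ≠ ⊤} ∧
    ContractibleMap (Subtype.val :
      {x : J → OpenInfty | ∃ k : Fin n, ∀ j ∈ S k, (x j : ENNReal) ≠ ⊤} → (J → OpenInfty)) := by
  have hset : {x : J → OpenInfty | ∃ k : Fin n, ∀ j ∈ S k, (x j : ENNReal) ≠ ⊤}
      = (Homeomorph.piCongrRight fun _ : J => eHomeo) ⁻¹'
        {y : J → ℝ≥0 | ∃ k : Fin n, ∀ j ∈ S k, y j ≠ 0} := by
    ext x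
    simp only [Set.mem_setOf_eq, Set.mem_preimage]
    refine exists_congr fun k => forall₂_congr fun j hj => ?_
    have : (Homeomorph.piCongrRight fun _ : J => eHomeo) x j = eHomeo (x j) := rfl
    rw [this]
    exact not_congr (eHomeo_eq_zero_iff (x j)).symm
  constructor
  · -- openness
    have h2 : {x : J → OpenInfty | ∃ k : Fin n, ∀ j ∈ S k, (x j : ENNReal) ≠ ⊤}
        = ⋃ k : Fin n, ⋂ j ∈ S k, {x : J → OpenInfty | (x j : ENNReal) ≠ ⊤} := by
      ext x; simp
    rw [h2]
    apply isOpen_iUnion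
    intro k
    apply Set.Finite.isOpen_biInter (Set.toFinite _)
    intro j _
    have hco : Continuous fun x : J → OpenInfty => (x j : ℝ≥0∞) :=
      continuous_subtype_val.comp (continuous_apply j)
    exact isOpen_compl_singleton.preimage hco
  · rw [hset]
    exact contractibleMap_val_preimage _ _ (nnreal_side hn S)
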